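/- arXiv:2012.13781 — 2 statements merged into one kernel-verified Lean document; each statement's English description precedes it below -/
import Mathlib

section
/- Let (𝒫, ≤, {Δ_i}_{i∈𝒫}) be an admissible homological system for the finite-dimensional k-algebra Λ, with projectives indexed {P_i}_{i∈𝒫} as above, and let i, i₁, i₂ ∈ 𝒫 with ī₁ > ī and ī₂ > ī in 𝒫̄. Suppose 0 → M → E → N → 0 is a short exact sequence of finite-dimensional Λ-modules such that M admits an i₁-bounded projective resolution and N admits an i₂-bounded projective resolution. Then E admits an i-bounded projective resolution P_E with the additional property that every indecomposable direct summand of P_E^0 is isomorphic to some P_j with j̄ > ī. -/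
/-!
# Statement 2

Horseshoe-type lemma: given an admissible homological system `(ι, ≤, Δ)` over `Λ`,
indices `i < i₁`, `i < i₂`, and a short exact sequence `0 → M → E → N → 0` with `M`
admitting an `i₁`-bounded projective resolution and `N` an `i₂`-bounded one, the middle
term `E` admits an `i`-bounded projective resolution whose degree-0 term only involves
projectives `P j` with `i < j`.
-/

open CategoryTheory

noncomputable section

variable (k : Type) [Field k] [IsAlgClosed k]
variable (Λ : Type) [Ring Λ] [Algebra k Λ] [FiniteDimensional k Λ]

/-- `Ext^n_Λ(X, Y)`, as a `k`-module. -/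
noncomputable abbrev extGrp (n : ℕ) (X Y : ModuleCat Λ) : ModuleCat k :=
  ((Ext k (ModuleCat Λ) n).obj (Opposite.op X)).obj Y

/-- Nonvanishing of `Ext^n_Λ(X, Y)`. -/
def extNZ (n : ℕ) (X Y : ModuleCat Λ) : Prop := Nontrivial (extGrp k Λ n X Y)

/-- A module is indecomposable. -/
def Indec (M : ModuleCat Λ) : Prop :=
  Nontrivial M ∧ ∀ N₁ N₂ : Submodule Λ M, IsCompl N₁ N₂ → N₁ = ⊥ ∨ N₂ = ⊥

variable (ι : Type) [Fintype ι] [Preorder ι]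

/-- `M` is zero or admits a finite filtration with factors among `{Δ i | ok i}`. -/
def HasFiltBy (Δ : ι → ModuleCat Λ) (ok : ι → Prop)
    (M : Type) [AddCommGroup M] [Module Λ M] : Prop :=
  Subsingleton M ∨
    ∃ (t : ℕ) (F : Fin (t + 1) → Submodule Λ M), Monotone F ∧ F 0 = ⊥ ∧ F (Fin.last t) = ⊤ ∧
      ∀ r : Fin t, ∃ i : ι, ok i ∧
        Nonempty ((↥(F r.succ) ⧸ Submodule.comap (F r.succ).subtype (F r.castSucc)) ≃ₗ[Λ] Δ i)

/-- Homological system. -/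
structure IsHomSys (Δ : ι → ModuleCat Λ) : Prop where
  findim : ∀ i, Module.Finite Λ (Δ i)
  indec : ∀ i, Indec Λ (Δ i)
  pairwise_noniso : ∀ i j, i ≠ j → IsEmpty (Δ i ≅ Δ j)
  hom_le : ∀ i j, (∃ f : Δ i ⟶ Δ j, f ≠ 0) → i ≤ j
  ext_lt : ∀ i j, extNZ k Λ 1 (Δ i) (Δ j) → i < j

/-- Complete irredundant family of representatives of the indecomposable projectives. -/
def IsCompleteProjFam (P : ι → ModuleCat Λ) : Prop :=
  (∀ i, Module.Finite Λ (P i) ∧ Indec Λ (P i) ∧ Projective (P i)) ∧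
  (∀ i j, i ≠ j → IsEmpty (P i ≅ P j)) ∧
  (∀ X : ModuleCat Λ, Module.Finite Λ X → Indec Λ X → Projective X → ∃ i, Nonempty (X ≅ P i))

/-- Admissible homological system. -/
structure IsAdmissibleHomSys.{u_1} (Δ : ι → ModuleCat Λ) extends IsHomSys k Λ ι Δ : Prop where
  lambda_filt : HasFiltBy Λ ι Δ (fun _ => True) Λ
  proj_fam : ∃ P : ι → ModuleCat.{u_1} Λ, IsCompleteProjFam Λ ι P

/-- Projective cover. -/
def IsProjCover {P M : ModuleCat Λ} (p : P ⟶ M) : Prop :=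
  Projective P ∧ Function.Surjective p ∧
    ∀ N : Submodule Λ P, N ⊔ LinearMap.ker p.hom = ⊤ → N = ⊤

/-- A projective resolution `⋯ → Q 1 → Q 0 → M → 0` of `M`. -/
structure IsProjRes (M : ModuleCat Λ) (Q : ℕ → ModuleCat Λ)
    (d : ∀ t : ℕ, Q (t + 1) ⟶ Q t) (ε : Q 0 ⟶ M) : Prop where
  proj : ∀ t, Projective (Q t)
  surj : Function.Surjective ε
  exact0 : LinearMap.range (d 0).hom = LinearMap.ker ε.hom
  exact : ∀ t, LinearMap.range (d (t + 1)).hom = LinearMap.ker (d t).hom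

/-- The resolution is finite. -/
def ResFinite (Q : ℕ → ModuleCat Λ) : Prop := ∃ m, ∀ t, m < t → Subsingleton (Q t)

/-- `X` is (isomorphic to) a direct summand of `Y`. -/
def IsSummand (X Y : ModuleCat Λ) : Prop := ∃ (s : X ⟶ Y) (r : Y ⟶ X), s ≫ r = 𝟙 X

/-- `i`-boundedness of a resolution with respect to the family `P`. -/
def ResBounded (P : ι → ModuleCat Λ) (i : ι) (Q : ℕ → ModuleCat Λ) : Prop :=
  ∀ (t : ℕ) (j : ι), IsSummand Λ (P j) (Q t) → i ≤ j ∧ (0 < t → i < j)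

/-- `M` admits a finite `i`-bounded projective resolution. -/
def HasBoundedProjRes (P : ι → ModuleCat Λ) (i : ι) (M : ModuleCat Λ) : Prop :=
  ∃ (Q : ℕ → ModuleCat Λ) (d : ∀ t : ℕ, Q (t + 1) ⟶ Q t) (ε : Q 0 ⟶ M),
    IsProjRes Λ M Q d ε ∧ ResFinite Λ Q ∧ ResBounded Λ ι P i Q


section MyAuxiliary

universe v

lemma myaux_lift {R : Type} [Ring R] {P A B : Type v} [AddCommGroup P] [Module R P] [AddCommGroup A] [Module R A]
    [AddCommGroup B] [Module R B] (hP : Module.Projective R P)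
    (ψ : A →ₗ[R] B) (φ : P →ₗ[R] B) (h : LinearMap.range φ ≤ LinearMap.range ψ) :
    ∃ χ : P →ₗ[R] A, ψ.comp χ = φ := by
  obtain ⟨χ, hχ⟩ := Module.projective_lifting_property ψ.rangeRestrict
    (φ.codRestrict (LinearMap.range ψ) fun x => h (LinearMap.mem_range_self φ x))
    (LinearMap.surjective_rangeRestrict ψ)
  refine ⟨χ, LinearMap.ext fun x => ?_⟩
  have := DFunLike.congr_fun hχ x
  simpa [Subtype.ext_iff] using congrArg Subtype.val this

/-- Fitting's lemma: the endomorphism ring of a finite-length indecomposable module is local. -/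

lemma myaux_fitting {R : Type} [Ring R] {X : Type v} [AddCommGroup X] [Module R X]
    (hart : IsArtinian R X) (hnoe : IsNoetherian R X)
    (hind : ∀ N₁ N₂ : Submodule R X, IsCompl N₁ N₂ → N₁ = ⊥ ∨ N₂ = ⊥)
    (e : Module.End R X) : IsUnit e ∨ IsUnit (1 - e) := by
  by_cases hu : IsUnit e
  · exact Or.inl hu
  right
  obtain ⟨Nn, hN⟩ := Filter.eventually_atTop.mp (LinearMap.eventually_isCompl_ker_pow_range_pow e)
  have hc := hN (Nn + 1) (Nat.le_succ Nn)
  rcases hind _ _ hc with h1 | h2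
  · exfalso
    apply hu
    have hinj : Function.Injective ⇑(e ^ (Nn + 1)) := LinearMap.ker_eq_bot.mp h1
    have htop : LinearMap.range (e ^ (Nn + 1)) = ⊤ := by
      have := hc.sup_eq_top; rwa [h1, bot_sup_eq] at this
    have hsurj : Function.Surjective ⇑(e ^ (Nn + 1)) := LinearMap.range_eq_top.mp htop
    refine (Module.End.isUnit_iff e).mpr ⟨?_, ?_⟩
    · intro x y hxy
      apply hinj
      rw [pow_succ]
      simpa [Module.End.mul_apply] using congrArg (e ^ Nn) hxy
    · intro y
      obtain ⟨z, hz⟩ := hsurj y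
      exact ⟨(e ^ Nn) z, by rw [← hz, pow_succ']; simp [Module.End.mul_apply]⟩
  · have hker : LinearMap.ker (e ^ (Nn + 1)) = ⊤ := by
      have := hc.sup_eq_top; rwa [h2, sup_bot_eq] at this
    exact IsNilpotent.isUnit_one_sub ⟨Nn + 1, LinearMap.ker_eq_top.mp hker⟩

lemma myaux_summand_prod {X Y Z : ModuleCat.{v} Λ}
    (hart : IsArtinian Λ X) (hnoe : IsNoetherian Λ X) (hX : Indec Λ X)
    (h : IsSummand Λ X (ModuleCat.of Λ (Y × Z))) : IsSummand Λ X Y ∨ IsSummand Λ X Z := by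
  obtain ⟨s, r, hsr⟩ := h
  have hsr' : ∀ x : X, r.hom (s.hom x) = x := fun x => by
    have := congrArg (fun φ => φ.hom x) hsr; simpa using this
  let s' : X →ₗ[Λ] Y × Z := s.hom
  let r' : (Y × Z) →ₗ[Λ] X := r.hom
  let e₁ : Module.End Λ X := (r'.comp (LinearMap.inl Λ Y Z)).comp ((LinearMap.fst Λ Y Z).comp s')
  let e₂ : Module.End Λ X := (r'.comp (LinearMap.inr Λ Y Z)).comp ((LinearMap.snd Λ Y Z).comp s')
  have hsum : e₂ = 1 - e₁ := by
    ext x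
    have : r' ((s' x).1, 0) + r' (0, (s' x).2) = x := by
      rw [← map_add]; simpa using hsr' x
    simp only [e₁, e₂, LinearMap.comp_apply, LinearMap.fst_apply, LinearMap.snd_apply,
      LinearMap.inl_apply, LinearMap.inr_apply, LinearMap.sub_apply, Module.End.one_apply]
    rw [eq_sub_iff_add_eq, add_comm]
    exact this
  rcases myaux_fitting hart hnoe hX.2 e₁ with hu | hu
  · left
    refine ⟨ModuleCat.ofHom ((LinearMap.fst Λ Y Z).comp s'), ModuleCat.ofHom (((↑hu.unit⁻¹ : Module.End Λ X).comp r').comp (LinearMap.inl Λ Y Z)), ?_⟩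
    have h1 : (↑hu.unit⁻¹ : Module.End Λ X) * e₁ = 1 := by
      exact hu.val_inv_mul
    ext x
    show (↑hu.unit⁻¹ : Module.End Λ X) (e₁ x) = x
    rw [← Module.End.mul_apply, h1, Module.End.one_apply]
  · right
    rw [← hsum] at hu
    refine ⟨ModuleCat.ofHom ((LinearMap.snd Λ Y Z).comp s'), ModuleCat.ofHom (((↑hu.unit⁻¹ : Module.End Λ X).comp r').comp (LinearMap.inr Λ Y Z)), ?_⟩
    have h1 : (↑hu.unit⁻¹ : Module.End Λ X) * e₂ = 1 := by
      exact hu.val_inv_mul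
    ext x
    show (↑hu.unit⁻¹ : Module.End Λ X) (e₂ x) = x
    rw [← Module.End.mul_apply, h1, Module.End.one_apply]

lemma myaux_horseshoe {M E N : ModuleCat.{v} Λ}
    (f : M ⟶ E) (g : E ⟶ N) (hf : Function.Injective f) (hg : Function.Surjective g)
    (hfg : LinearMap.range f.hom = LinearMap.ker g.hom)
    {Qm : ℕ → ModuleCat.{v} Λ} {dm : ∀ t, Qm (t+1) ⟶ Qm t} {εm : Qm 0 ⟶ M}
    (hRm : IsProjRes Λ M Qm dm εm)
    {Qn : ℕ → ModuleCat.{v} Λ} {dn : ∀ t, Qn (t+1) ⟶ Qn t} {εn : Qn 0 ⟶ N}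
    (hRn : IsProjRes Λ N Qn dn εn) :
    ∃ (d : ∀ t, ModuleCat.of Λ (Qm (t+1) × Qn (t+1)) ⟶ ModuleCat.of Λ (Qm t × Qn t))
      (ε : ModuleCat.of Λ (Qm 0 × Qn 0) ⟶ E),
      IsProjRes Λ E (fun t => ModuleCat.of Λ (Qm t × Qn t)) d ε := by
  classical
  -- projectivity as modules
  have pn : ∀ t, Module.Projective Λ (Qn t) := fun t => (IsProjective.iff_projective (Qn t)).mpr (hRn.proj t)
  -- linear-map views
  let f' : M →ₗ[Λ] E := f.hom
  let g' : E →ₗ[Λ] N := g.hom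
  let εm' : Qm 0 →ₗ[Λ] M := εm.hom
  let εn' : Qn 0 →ₗ[Λ] N := εn.hom
  let δ0 : Qm 0 →ₗ[Λ] E := f'.comp εm'
  have hδ0range : LinearMap.range δ0 = LinearMap.range f' := by
    rw [LinearMap.range_comp, LinearMap.range_eq_top.mpr hRm.surj, Submodule.map_top]
  -- lift of εn through g
  obtain ⟨σ, hσ⟩ : ∃ σ : Qn 0 →ₗ[Λ] E, g'.comp σ = εn' :=
    Module.projective_lifting_property g' εn' hg
  have hσ' : ∀ y, g (σ y) = εn y := fun y => DFunLike.congr_fun hσ y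
  -- the connecting map χ 0
  obtain ⟨χ0, hχ0⟩ : ∃ χ0 : Qn 1 →ₗ[Λ] Qm 0, δ0.comp χ0 = -(σ.comp (dn 0).hom) := by
    refine myaux_lift (pn 1) _ _ ?_
    rintro x ⟨y, rfl⟩
    rw [hδ0range, hfg]
    have : εn (dn 0 y) = 0 := by
      have : (dn 0) y ∈ LinearMap.ker εn' := by
        rw [← hRn.exact0]; exact LinearMap.mem_range_self _ y
      exact this
    simp only [LinearMap.neg_apply, LinearMap.comp_apply, LinearMap.mem_ker, map_neg,
      neg_eq_zero]
    rw [hσ' ]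
    exact this
  -- existence of the next connecting map, given the previous invariant
  have ex2 : ∀ (t : ℕ) (p : (Qn (t+1) →ₗ[Λ] Qm t) × (Qn (t+2) →ₗ[Λ] Qm (t+1))),
      (LinearMap.comp (dm t).hom p.2 = -(p.1.comp (dn (t+1)).hom)) →
      ∃ χ' : Qn (t+3) →ₗ[Λ] Qm (t+2),
        LinearMap.comp (dm (t+1)).hom χ' = -(p.2.comp (dn (t+2)).hom) := by
    intro t p hp
    refine myaux_lift (pn (t+3)) _ _ ?_
    rintro x ⟨y, rfl⟩
    rw [hRm.exact t]
    have h1 : dn (t+1) ((dn (t+2)) y) = 0 := by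
      have : (dn (t+2)) y ∈ LinearMap.ker (dn (t+1)).hom := by
        rw [← hRn.exact (t+1)]; exact LinearMap.mem_range_self _ y
      exact this
    have h2 : dm t (p.2 (dn (t+2) y)) = -(p.1 (dn (t+1) (dn (t+2) y))) :=
      DFunLike.congr_fun hp (dn (t+2) y)
    simp only [LinearMap.neg_apply, LinearMap.comp_apply, LinearMap.mem_ker, map_neg,
      neg_eq_zero]
    rw [h2, h1]
    simp
  -- base pair
  obtain ⟨χ1, hχ1⟩ : ∃ χ1 : Qn 2 →ₗ[Λ] Qm 1,
      LinearMap.comp (dm 0).hom χ1 = -(χ0.comp (dn 1).hom) := by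
    refine myaux_lift (pn 2) _ _ ?_
    rintro x ⟨y, rfl⟩
    rw [hRm.exact0]
    have h1 : dn 0 ((dn 1) y) = 0 := by
      have : (dn 1) y ∈ LinearMap.ker (dn 0).hom := by
        rw [← hRn.exact 0]; exact LinearMap.mem_range_self _ y
      exact this
    have h2 : f (εm (χ0 (dn 1 y))) = -(σ (dn 0 (dn 1 y))) := DFunLike.congr_fun hχ0 (dn 1 y)
    simp only [LinearMap.neg_apply, LinearMap.comp_apply, LinearMap.mem_ker, map_neg,
      neg_eq_zero]
    apply hf
    rw [h2, h1]
    simp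
  -- the recursive family of connecting maps
  let F : ∀ t : ℕ, {p : (Qn (t+1) →ₗ[Λ] Qm t) × (Qn (t+2) →ₗ[Λ] Qm (t+1)) //
      LinearMap.comp (dm t).hom p.2 = -(p.1.comp (dn (t+1)).hom)} := fun t =>
    Nat.rec ⟨(χ0, χ1), hχ1⟩
      (fun t ih => ⟨(ih.1.2, Classical.choose (ex2 t ih.1 ih.2)),
        Classical.choose_spec (ex2 t ih.1 ih.2)⟩) t
  let χ : ∀ t : ℕ, Qn (t+1) →ₗ[Λ] Qm t := fun t => (F t).1.1
  have hstep : ∀ t, χ (t+1) = (F t).1.2 := fun t => rfl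
  have hχ0' : χ 0 = χ0 := rfl
  have hinv : ∀ t, LinearMap.comp (dm t).hom (χ (t+1)) = -((χ t).comp (dn (t+1)).hom) := by
    intro t
    rw [hstep]
    exact (F t).2
  -- pointwise invariants
  have hinv0' : ∀ y : Qn 1, f (εm (χ 0 y)) = -(σ (dn 0 y)) := by
    intro y
    have := DFunLike.congr_fun hχ0 y
    exact this
  have hinv' : ∀ (t : ℕ) (y : Qn (t+2)), dm t (χ (t+1) y) = -(χ t (dn (t+1) y)) := by
    intro t y
    have := DFunLike.congr_fun (hinv t) y
    simpa using this
  -- pointwise exactness facts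
  have hMex0 : ∀ a : Qm 1, εm (dm 0 a) = 0 := by
    intro a
    have : (dm 0) a ∈ LinearMap.ker εm' := by rw [← hRm.exact0]; exact LinearMap.mem_range_self _ a
    exact this
  have hMex : ∀ (t : ℕ) (a : Qm (t+2)), dm t (dm (t+1) a) = 0 := by
    intro t a
    have : (dm (t+1)) a ∈ LinearMap.ker (dm t).hom := by
      rw [← hRm.exact t]; exact LinearMap.mem_range_self _ a
    exact this
  have hNex : ∀ (t : ℕ) (b : Qn (t+2)), dn t (dn (t+1) b) = 0 := by
    intro t b
    have : (dn (t+1)) b ∈ LinearMap.ker (dn t).hom := by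
      rw [← hRn.exact t]; exact LinearMap.mem_range_self _ b
    exact this
  -- the total resolution
  refine ⟨fun t => ModuleCat.ofHom (LinearMap.prod
      (((dm t).hom.comp (LinearMap.fst Λ (Qm (t+1)) (Qn (t+1)))) +
        ((χ t).comp (LinearMap.snd Λ (Qm (t+1)) (Qn (t+1)))))
      ((dn t).hom.comp (LinearMap.snd Λ (Qm (t+1)) (Qn (t+1))))),
    ModuleCat.ofHom ((δ0.comp (LinearMap.fst Λ (Qm 0) (Qn 0))) + (σ.comp (LinearMap.snd Λ (Qm 0) (Qn 0)))),
    ?_, ?_, ?_, ?_⟩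
  · -- projectivity
    intro t
    haveI := hRm.proj t
    haveI := hRn.proj t
    exact Projective.of_iso (ModuleCat.biprodIsoProd (Qm t) (Qn t)) inferInstance
  · -- surjectivity of ε
    intro e
    obtain ⟨y, hy⟩ := hRn.surj (g e)
    have h1 : g (e - σ y) = 0 := by
      rw [map_sub, hσ' y, hy, sub_self]
    have h2 : e - σ y ∈ LinearMap.range f' := by rw [hfg]; exact h1
    obtain ⟨m, hm⟩ := h2
    obtain ⟨x, hx⟩ := hRm.surj m
    refine ⟨(x, y), ?_⟩
    show f (εm x) + σ y = e
    rw [hx, hm, sub_add_cancel]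
  · -- exactness at degree 0
    apply le_antisymm
    · rintro z ⟨⟨a, b⟩, rfl⟩
      rw [LinearMap.mem_ker]
      show f (εm (dm 0 a + χ 0 b)) + σ (dn 0 b) = 0
      rw [map_add, map_add, hMex0 a, map_zero, zero_add, hinv0' b, neg_add_cancel]
    · rintro ⟨x, y⟩ hz
      have heq : f (εm x) + σ y = 0 := hz
      have h1 : εn y = 0 := by
        have h2 : g (f (εm x)) = 0 := by
          have : f (εm x) ∈ LinearMap.ker g' := by
            rw [← hfg]; exact LinearMap.mem_range_self _ (εm x)
          exact this
        have := congrArg g' heq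
        rw [map_add, map_zero] at this
        rw [← hσ' y]
        rw [h2, zero_add] at this
        exact this
      obtain ⟨y', hy'⟩ : y ∈ LinearMap.range (dn 0).hom := by rw [hRn.exact0]; exact h1
      have h2 : f (εm (x - χ 0 y')) = 0 := by
        rw [map_sub, map_sub, hinv0' y', hy', sub_neg_eq_add]
        exact heq
      have h3 : εm (x - χ 0 y') = 0 := by
        apply hf
        rw [h2, map_zero]
      obtain ⟨x', hx'⟩ : x - χ 0 y' ∈ LinearMap.range (dm 0).hom := by rw [hRm.exact0]; exact h3
      refine ⟨(x', y'), ?_⟩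
      show (dm 0 x' + χ 0 y', dn 0 y') = (x, y)
      rw [hx', hy', sub_add_cancel]
  · -- exactness at degree t+1
    intro t
    apply le_antisymm
    · rintro z ⟨⟨a, b⟩, rfl⟩
      rw [LinearMap.mem_ker]
      show (dm t (dm (t+1) a + χ (t+1) b) + χ t (dn (t+1) b),
            dn t (dn (t+1) b)) = 0
      rw [map_add, hMex t a, zero_add, hinv' t b, neg_add_cancel, hNex t b]
      rfl
    · rintro ⟨x, y⟩ hz
      have heq : (dm t x + χ t y, dn t y) = (0, 0) := hz
      have h1 : dn t y = 0 := congrArg Prod.snd heq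
      have h2 : dm t x + χ t y = 0 := congrArg Prod.fst heq
      obtain ⟨y', hy'⟩ : y ∈ LinearMap.range (dn (t+1)).hom := by rw [hRn.exact t]; exact h1
      have h3 : dm t (x - χ (t+1) y') = 0 := by
        rw [map_sub, hinv' t y', hy', sub_neg_eq_add]
        exact h2
      obtain ⟨x', hx'⟩ : x - χ (t+1) y' ∈ LinearMap.range (dm (t+1)).hom := by
        rw [hRm.exact t]; exact h3
      refine ⟨(x', y'), ?_⟩
      show (dm (t+1) x' + χ (t+1) y', dn (t+1) y') = (x, y)
      rw [hx', hy', sub_add_cancel]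

end MyAuxiliary

/-- Let `(ι, ≤, Δ)` be an admissible homological system for `Λ`, with
projectives indexed as `{P i}` so that `P i` is a projective cover of `Δ i`, and let
`i, i₁, i₂ : ι` with `i < i₁` and `i < i₂`.  If `0 → M → E → N → 0` is a short exact
sequence of finite-dimensional `Λ`-modules with `M` admitting an `i₁`-bounded projective
resolution and `N` an `i₂`-bounded one, then `E` admits an `i`-bounded projective
resolution `Q` such that every `P j` isomorphic to a direct summand of `Q 0`
satisfies `i < j`. -/
theorem statement2 (Δ : ι → ModuleCat Λ) (h : IsAdmissibleHomSys k Λ ι Δ)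
    (P : ι → ModuleCat Λ) (hP : IsCompleteProjFam Λ ι P)
    (hcover : ∀ i, ∃ p : P i ⟶ Δ i, IsProjCover Λ p)
    (i i₁ i₂ : ι) (hi₁ : i < i₁) (hi₂ : i < i₂)
    (M E N : ModuleCat Λ)
    (hMfin : Module.Finite Λ M) (hEfin : Module.Finite Λ E) (hNfin : Module.Finite Λ N)
    (f : M ⟶ E) (g : E ⟶ N)
    (hf : Function.Injective f) (hg : Function.Surjective g)
    (hfg : LinearMap.range f.hom = LinearMap.ker g.hom)
    (hM : HasBoundedProjRes Λ ι P i₁ M) (hN : HasBoundedProjRes Λ ι P i₂ N) :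
    ∃ (Q : ℕ → ModuleCat Λ) (d : ∀ t : ℕ, Q (t + 1) ⟶ Q t) (ε : Q 0 ⟶ E),
      IsProjRes Λ E Q d ε ∧ ResFinite Λ Q ∧ ResBounded Λ ι P i Q ∧
        ∀ j : ι, IsSummand Λ (P j) (Q 0) → i < j := by
  classical
  obtain ⟨Qm, dm, εm, hRm, ⟨mM, hmM⟩, hBm⟩ := hM
  obtain ⟨Qn, dn, εn, hRn, ⟨mN, hmN⟩, hBn⟩ := hN
  obtain ⟨d, ε, hRes⟩ := myaux_horseshoe Λ f g hf hg hfg hRm hRn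
  haveI : IsArtinianRing Λ := IsArtinianRing.of_finite k Λ
  haveI : IsNoetherianRing Λ := isNoetherian_of_tower k inferInstance
  have key : ∀ (t : ℕ) (j : ι), IsSummand Λ (P j) (ModuleCat.of Λ (Qm t × Qn t)) → i < j := by
    intro t j hs
    haveI : Module.Finite Λ (P j) := (hP.1 j).1
    rcases myaux_summand_prod Λ inferInstance inferInstance (hP.1 j).2.1 hs with hsum | hsum
    · exact lt_of_lt_of_le hi₁ (hBm t j hsum).1
    · exact lt_of_lt_of_le hi₂ (hBn t j hsum).1
  refine ⟨fun t => ModuleCat.of Λ (Qm t × Qn t), d, ε, hRes, ⟨max mM mN, ?_⟩,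
    fun t j hs => ⟨(key t j hs).le, fun _ => key t j hs⟩, fun j hs => key 0 j hs⟩
  intro t ht
  haveI : Subsingleton (Qm t) := hmM t (lt_of_le_of_lt (le_max_left _ _) ht)
  haveI : Subsingleton (Qn t) := hmN t (lt_of_le_of_lt (le_max_right _ _) ht)
  exact (inferInstance : Subsingleton ((Qm t) × (Qn t)))

end
end

section
/- Let (𝒫, ≤) be a finite preordered set with quotient poset 𝒫̄ = 𝒫/∼ of cardinality ℓ, and let S = ∏_{i∈𝒫} k with idempotents e_i. Let U and V be S-S-bimodules such that e_j U e_i ≠ 0 implies ī < j̄ in 𝒫̄ (i.e. i ≤ j and i ≁ j), and e_j V e_i ≠ 0 implies i ≤ j. Then for every n ≥ 1 and every sequence X_1, …, X_n of S-S-bimodules with each X_m ∈ {U, V}: if strictly more than ℓ of the X_m are equal to U, then the tensor product X_n ⊗_S ⋯ ⊗_S X_1 is the zero module. Equivalently, in the tensor power (U ⊕ V)^{⊗_S n}, graded by assigning degree 0 to U and degree 1 to V, every nonzero homogeneous element h satisfies |h| ≥ n − ℓ. -/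
/-!
# Statement 8

Let `(ι, ≤)` be a finite preordered set with quotient poset of cardinality `ℓ`, and let
`S = ∏_{i ∈ ι} k` with idempotents `e i`.  Let `U`, `V` be `S`-`S`-bimodules with
`e j • U • e i ≠ 0 → i < j` and `e j • V • e i ≠ 0 → i ≤ j`.  Then any `S`-balanced
tensor product `X n ⊗_S ⋯ ⊗_S X 1` of bimodules each isomorphic to `U` or to `V`, in
which strictly more than `ℓ` factors are (isomorphic to) `U`, vanishes.

Bimodules are encoded as `k`-modules with two commuting actions of `S := ι → k`, and
the `n`-fold balanced tensor product as the quotient of the `n`-fold tensor product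
over `k` by the balancing relations between adjacent factors.
-/

/-- An `S`-`S`-bimodule structure (with `k` acting centrally) on the `k`-module `M`. -/
structure BimodAct (k S M : Type) [CommRing k] [CommRing S] [Algebra k S]
    [AddCommGroup M] [Module k M] where
  l : S →ₐ[k] Module.End k M
  r : S →ₐ[k] Module.End k M
  comm : ∀ s t : S, (l s) * (r t) = (r t) * (l s)

set_option linter.unusedSectionVars false

noncomputable section

variable (k : Type) [Field k]
variable (ι : Type) [Fintype ι] [DecidableEq ι] [Preorder ι]

/-- The idempotent `e i` of `S = ι → k`. -/
def idem (i : ι) : ι → k := Pi.single i 1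

/-- `φ` is an isomorphism of `S`-`S`-bimodules. -/
def IsBimodIso {X Y : Type} [AddCommGroup X] [Module k X] [AddCommGroup Y] [Module k Y]
    (aX : BimodAct k (ι → k) X) (aY : BimodAct k (ι → k) Y) (φ : X ≃ₗ[k] Y) : Prop :=
  (∀ (s : ι → k) (x : X), φ (aX.l s x) = aY.l s (φ x)) ∧
  (∀ (s : ι → k) (x : X), φ (aX.r s x) = aY.r s (φ x))

/-- The balancing relations between adjacent factors of the tensor product
`X (n-1) ⊗ ⋯ ⊗ X 0` (the factor `X m` is written to the right of `X (m+1)`):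
`(x·s) ⊗ y - x ⊗ (s·y)`. -/
def relSetP (n : ℕ) (X : Fin n → Type) [∀ m, AddCommGroup (X m)] [∀ m, Module k (X m)]
    (aX : ∀ m, BimodAct k (ι → k) (X m)) : Set (PiTensorProduct k X) :=
  {z | ∃ (m : ℕ) (hm : m + 1 < n) (s : ι → k) (x : ∀ u, X u),
    z = PiTensorProduct.tprod k
          (Function.update x ⟨m + 1, hm⟩ ((aX ⟨m + 1, hm⟩).r s (x ⟨m + 1, hm⟩)))
      - PiTensorProduct.tprod k
          (Function.update x ⟨m, Nat.lt_of_succ_lt hm⟩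
            ((aX ⟨m, Nat.lt_of_succ_lt hm⟩).l s (x ⟨m, Nat.lt_of_succ_lt hm⟩)))}

/-- The `S`-balanced tensor product `X (n-1) ⊗_S ⋯ ⊗_S X 0`. -/
abbrev TensP (n : ℕ) (X : Fin n → Type) [∀ m, AddCommGroup (X m)] [∀ m, Module k (X m)]
    (aX : ∀ m, BimodAct k (ι → k) (X m)) :=
  (PiTensorProduct k X) ⧸ Submodule.span k (relSetP k ι n X aX)

/-! ### Auxiliary lemmas -/

lemma idem_mul_self (i : ι) : idem k ι i * idem k ι i = idem k ι i := by
  funext x; simp [idem, Pi.single_apply]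

lemma idem_mul_ne (i j : ι) (h : i ≠ j) : idem k ι i * idem k ι j = 0 := by
  funext x; simp [idem, Pi.single_apply]
  intro h1 h2; exact h (h2.symm.trans h1)

lemma sum_idem : ∑ i : ι, idem k ι i = 1 := by
  funext x
  simp [idem, Finset.sum_apply, Pi.single_apply]

lemma sum_r_apply {M : Type} [AddCommGroup M] [Module k M]
    (a : BimodAct k (ι → k) M) (w : M) :
    ∑ j : ι, a.r (idem k ι j) w = w := by
  have h : ∑ j : ι, a.r (idem k ι j) = 1 := by
    rw [← map_sum, sum_idem, map_one]
  calc ∑ j : ι, a.r (idem k ι j) w = (∑ j : ι, a.r (idem k ι j)) w := by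
        rw [LinearMap.sum_apply]
    _ = w := by rw [h]; rfl

lemma sum_l_apply {M : Type} [AddCommGroup M] [Module k M]
    (a : BimodAct k (ι → k) M) (w : M) :
    ∑ j : ι, a.l (idem k ι j) w = w := by
  have h : ∑ j : ι, a.l (idem k ι j) = 1 := by
    rw [← map_sum, sum_idem, map_one]
  calc ∑ j : ι, a.l (idem k ι j) w = (∑ j : ι, a.l (idem k ι j)) w := by
        rw [LinearMap.sum_apply]
    _ = w := by rw [h]; rfl

lemma sum_sandwich {M : Type} [AddCommGroup M] [Module k M]
    (a : BimodAct k (ι → k) M) (z : M) :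
    ∑ p : ι × ι, a.l (idem k ι p.1) (a.r (idem k ι p.2) z) = z := by
  rw [Fintype.sum_prod_type]
  calc ∑ i : ι, ∑ j : ι, a.l (idem k ι i) (a.r (idem k ι j) z)
      = ∑ i : ι, a.l (idem k ι i) (∑ j : ι, a.r (idem k ι j) z) := by
        refine Finset.sum_congr rfl fun i _ => ?_
        rw [map_sum]
    _ = ∑ i : ι, a.l (idem k ι i) z := by
        refine Finset.sum_congr rfl fun i _ => ?_
        rw [sum_r_apply]
    _ = z := sum_l_apply k ι a z

lemma sandwich_r {M : Type} [AddCommGroup M] [Module k M]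
    (a : BimodAct k (ι → k) M) (i j : ι) (z : M) :
    a.r (idem k ι i) (a.l (idem k ι j) (a.r (idem k ι i) z))
      = a.l (idem k ι j) (a.r (idem k ι i) z) := by
  have hc := (a.comm (idem k ι j) (idem k ι i)).symm
  have h1 : a.r (idem k ι i) (a.l (idem k ι j) (a.r (idem k ι i) z))
      = a.l (idem k ι j) (a.r (idem k ι i) (a.r (idem k ι i) z)) :=
    congrArg (fun f : Module.End k M => f (a.r (idem k ι i) z)) hc
  rw [h1]
  have h2 : a.r (idem k ι i) (a.r (idem k ι i) z) = a.r (idem k ι i) z := by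
    have h3 : a.r (idem k ι i) * a.r (idem k ι i) = a.r (idem k ι i) := by
      rw [← map_mul, idem_mul_self]
    exact congrArg (fun f : Module.End k M => f z) h3
  rw [h2]

lemma sandwich_l_ne {M : Type} [AddCommGroup M] [Module k M]
    (a : BimodAct k (ι → k) M) (i j : ι) (h : i ≠ j) (z : M) :
    a.l (idem k ι i) (a.l (idem k ι j) z) = 0 := by
  have h3 : a.l (idem k ι i) * a.l (idem k ι j) = 0 := by
    rw [← map_mul, idem_mul_ne k ι i j h, map_zero]
  simpa using congrArg (fun f : Module.End k M => f z) h3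


set_option maxHeartbeats 1000000 in
/-- Let `(ι, ≤)` be a finite preordered set whose quotient poset
`ι/∼` has cardinality `ℓ`, and let `U`, `V` be bimodules over `S = ∏_{i ∈ ι} k` such
that `e j • U • e i ≠ 0` implies `i < j` and `e j • V • e i ≠ 0` implies `i ≤ j`.
If `X (n-1), …, X 0` is a sequence of `S`-`S`-bimodules, each isomorphic to `U` or to
`V`, and strictly more than `ℓ` of them are isomorphic to `U`, then the balanced tensor
product `X (n-1) ⊗_S ⋯ ⊗_S X 0` is the zero module. -/
theorem statement8
    {U V : Type} [AddCommGroup U] [Module k U] [AddCommGroup V] [Module k V]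
    (aU : BimodAct k (ι → k) U) (aV : BimodAct k (ι → k) V)
    (hU : ∀ i j : ι, (∃ u : U, aU.l (idem k ι j) (aU.r (idem k ι i) u) ≠ 0) → i < j)
    (hV : ∀ i j : ι, (∃ v : V, aV.l (idem k ι j) (aV.r (idem k ι i) v) ≠ 0) → i ≤ j)
    (n : ℕ) (hn : 1 ≤ n)
    (X : Fin n → Type) [∀ m, AddCommGroup (X m)] [∀ m, Module k (X m)]
    (aX : ∀ m, BimodAct k (ι → k) (X m))
    (isU : Fin n → Bool)
    (hiso : ∀ m, (isU m = true → ∃ φ : X m ≃ₗ[k] U, IsBimodIso k ι (aX m) aU φ) ∧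
                 (isU m = false → ∃ φ : X m ≃ₗ[k] V, IsBimodIso k ι (aX m) aV φ))
    (hcount : Nat.card (Antisymmetrization ι (· ≤ ·)) <
      (Finset.univ.filter (fun m => isU m = true)).card) :
    Subsingleton (TensP k ι n X aX) := by
  rw [Submodule.Quotient.subsingleton_iff, eq_top_iff,
    ← PiTensorProduct.span_tprod_eq_top, Submodule.span_le]
  rintro z ⟨x, rfl⟩
  set N := Submodule.span k (relSetP k ι n X aX) with hNdef
  have hexp : (PiTensorProduct.tprod k) x
      = ∑ c : Fin n → ι × ι, (PiTensorProduct.tprod k)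
          (fun m => (aX m).l (idem k ι (c m).1) ((aX m).r (idem k ι (c m).2) (x m))) := by
    conv_lhs => rw [show x = (fun m => ∑ p : ι × ι,
      (aX m).l (idem k ι p.1) ((aX m).r (idem k ι p.2) (x m))) from
      funext fun m => (sum_sandwich k ι (aX m) (x m)).symm]
    exact MultilinearMap.map_sum _ _
  rw [SetLike.mem_coe, hexp]
  refine Submodule.sum_mem _ fun c _ => ?_
  set y : ∀ m, X m :=
    fun m => (aX m).l (idem k ι (c m).1) ((aX m).r (idem k ι (c m).2) (x m)) with hy
  by_cases hz : ∃ m, y m = 0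
  · obtain ⟨m, hm⟩ := hz
    rw [(PiTensorProduct.tprod k).map_coord_zero m hm]
    exact Submodule.zero_mem N
  push_neg at hz
  by_cases hmatch : ∀ (m : ℕ) (hm : m + 1 < n),
      (c ⟨m + 1, hm⟩).2 = (c ⟨m, Nat.lt_of_succ_lt hm⟩).1
  · exfalso
    have hstep : ∀ m : Fin n, (c m).2 ≤ (c m).1 ∧ (isU m = true → (c m).2 < (c m).1) := by
      intro m
      have hym : y m ≠ 0 := hz m
      cases hb : isU m with
      | true =>
        obtain ⟨φ, hφl, hφr⟩ := (hiso m).1 hb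
        have hne : aU.l (idem k ι (c m).1) (aU.r (idem k ι (c m).2) (φ (x m))) ≠ 0 := by
          rw [← hφr, ← hφl]
          exact φ.map_ne_zero_iff.mpr hym
        have hlt := hU _ _ ⟨φ (x m), hne⟩
        exact ⟨le_of_lt hlt, fun _ => hlt⟩
      | false =>
        obtain ⟨φ, hφl, hφr⟩ := (hiso m).2 hb
        have hne : aV.l (idem k ι (c m).1) (aV.r (idem k ι (c m).2) (φ (x m))) ≠ 0 := by
          rw [← hφr, ← hφl]
          exact φ.map_ne_zero_iff.mpr hym
        exact ⟨hV _ _ ⟨φ (x m), hne⟩, fun h => by simp [hb] at h⟩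
    classical
    set Q : ℕ → ι := fun m =>
      if h : m < n then (c ⟨m, h⟩).2 else (c ⟨n - 1, by omega⟩).1 with hQ
    have hQ0 : ∀ (m : ℕ) (h : m < n), Q m = (c ⟨m, h⟩).2 := fun m h => dif_pos h
    have hQ1 : ∀ (m : ℕ) (h : m < n), Q (m + 1) = (c ⟨m, h⟩).1 := by
      intro m h
      by_cases h2 : m + 1 < n
      · rw [show Q (m + 1) = (c ⟨m + 1, h2⟩).2 from dif_pos h2]
        exact hmatch m h2
      · have hfe : (⟨n - 1, by omega⟩ : Fin n) = ⟨m, h⟩ := Fin.ext (by show n - 1 = m; omega)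
        rw [show Q (m + 1) = (c ⟨n - 1, by omega⟩).1 from dif_neg h2, hfe]
    set P : ℕ → Antisymmetrization ι (· ≤ ·) :=
      fun m => toAntisymmetrization (· ≤ ·) (Q m) with hP
    have hPmono : Monotone P := by
      apply monotone_nat_of_le_succ
      intro m
      by_cases h : m < n
      · simp only [hP]
        rw [hQ0 m h, hQ1 m h]
        exact (hstep ⟨m, h⟩).1
      · have heq : Q m = Q (m + 1) := by
          rw [show Q m = (c ⟨n - 1, by omega⟩).1 from dif_neg h,
            show Q (m + 1) = (c ⟨n - 1, by omega⟩).1 from dif_neg (by omega)]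
        simp only [hP, heq]
        exact le_refl _
    have hPstrict : ∀ m : Fin n, isU m = true → P m.val < P (m.val + 1) := by
      intro m hb
      simp only [hP]
      rw [hQ0 m.val m.isLt, hQ1 m.val m.isLt]
      exact (hstep m).2 hb
    have hinj : Function.Injective (fun m : {m : Fin n // isU m = true} => P m.val.val) := by
      have hlt : ∀ m1 m2 : {m : Fin n // isU m = true}, m1.val.val < m2.val.val →
          P m1.val.val < P m2.val.val := by
        intro m1 m2 h
        exact lt_of_lt_of_le (hPstrict m1.val m1.prop) (hPmono h)
      intro m1 m2 heq
      rcases lt_trichotomy m1.val.val m2.val.val with h | h | h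
      · exact absurd heq (ne_of_lt (hlt _ _ h))
      · exact Subtype.ext (Fin.ext h)
      · exact absurd heq.symm (ne_of_lt (hlt _ _ h))
    have hfin : Finite (Antisymmetrization ι (· ≤ ·)) := by
      unfold Antisymmetrization; exact Quotient.finite _
    have hle := Nat.card_le_card_of_injective _ hinj
    rw [Nat.card_eq_fintype_card, Fintype.card_subtype] at hle
    exact absurd hcount (not_lt.mpr hle)
  · push_neg at hmatch
    obtain ⟨m, hm, hne⟩ := hmatch
    have hm' : m < n := Nat.lt_of_succ_lt hm
    have hrel : (PiTensorProduct.tprod k)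
        (Function.update y ⟨m + 1, hm⟩
          ((aX ⟨m + 1, hm⟩).r (idem k ι (c ⟨m + 1, hm⟩).2) (y ⟨m + 1, hm⟩)))
      - (PiTensorProduct.tprod k)
        (Function.update y ⟨m, Nat.lt_of_succ_lt hm⟩
          ((aX ⟨m, Nat.lt_of_succ_lt hm⟩).l (idem k ι (c ⟨m + 1, hm⟩).2)
            (y ⟨m, Nat.lt_of_succ_lt hm⟩))) ∈ N :=
      Submodule.subset_span ⟨m, hm, idem k ι (c ⟨m + 1, hm⟩).2, y, rfl⟩
    have h1 : (aX ⟨m + 1, hm⟩).r (idem k ι (c ⟨m + 1, hm⟩).2) (y ⟨m + 1, hm⟩)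
        = y ⟨m + 1, hm⟩ :=
      sandwich_r k ι (aX ⟨m + 1, hm⟩) _ _ (x ⟨m + 1, hm⟩)
    have h2 : (aX ⟨m, Nat.lt_of_succ_lt hm⟩).l (idem k ι (c ⟨m + 1, hm⟩).2)
        (y ⟨m, Nat.lt_of_succ_lt hm⟩) = 0 :=
      sandwich_l_ne k ι (aX ⟨m, Nat.lt_of_succ_lt hm⟩) _ _ hne _
    rw [h1, Function.update_eq_self, h2, MultilinearMap.map_update_zero] at hrel
    simpa using hrel


end
end
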